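/- Let C be a small category, D a full subcategory, and ν : F → G a morphism of presheaves on C which factors through the quotient as ν_D : β_D F → G. Then ν_D is objectwise injective if and only if the restriction of ν to objects of D, i.e., ν_D' : F(D') → G(D') for all D' in D, is injective for every object D' of D. -/

import Mathlib

open CategoryTheory Opposite

universe u

/-- The relation `x ∼_D y` on `F(X)`. -/
def simD {C : Type u} [SmallCategory C] (P : C → Prop) (F : Cᵒᵖ ⥤ Type u)
    (X : C) (x y : F.obj (op X)) : Prop :=
  ∀ (D : C), P D → ∀ j : D ⟶ X, F.map j.op x = F.map j.op y

/-- Let `ν : F ⟶ G` factor through the quotient `F → β_D F` as `ν_D`.  Then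
`ν_D` is objectwise injective if and only if the restriction of `ν` to the
objects of `D` is injective. -/
theorem betaD_factor_injective_iff {C : Type u} [SmallCategory C] (P : C → Prop)
    (F G : Cᵒᵖ ⥤ Type u) (ν : F ⟶ G)
    (hfac : ∀ (X : C) (x y : F.obj (op X)),
      simD P F X x y → ν.app (op X) x = ν.app (op X) y)
    (νD : ∀ X : C, Quot (simD P F X) → G.obj (op X))
    (hνD : ∀ (X : C) (x : F.obj (op X)), νD X (Quot.mk _ x) = ν.app (op X) x) :
    (∀ X : C, Function.Injective (νD X)) ↔
      (∀ D' : C, P D' → Function.Injective (ν.app (op D'))) := by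
  constructor
  · intro h D' hD' x y hxy
    have hq : Quot.mk _ x = Quot.mk _ y :=
      h D' (by rw [hνD, hνD]; exact hxy)
    have hresp : ∀ a b : F.obj (op D'), simD P F D' a b → a = b := fun a b hab => by
      have := hab D' hD' (𝟙 D')
      simpa using this
    have := congrArg (Quot.lift (fun z : F.obj (op D') => z) hresp) hq
    simpa using this
  · intro h X q1 q2 hq
    induction q1 using Quot.ind with | _ x =>
    induction q2 using Quot.ind with | _ y =>
    rw [hνD, hνD] at hq
    apply Quot.sound
    intro D' hD' j
    apply h D' hD'
    have n1 := congrArg (fun f => f x) (ν.naturality j.op)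
    have n2 := congrArg (fun f => f y) (ν.naturality j.op)
    simp only [types_comp_apply] at n1 n2
    rw [n1, n2, hq]
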